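/- For every n ∈ ℕ and every pair of sequences x^n, y^n ∈ 𝒵^n, the generalized likelihood ratio of the two-sample testing problem, Λ(x^n,y^n) = (sup_{P ∈ 𝒫̄(𝒵)} P^n(x^n)·P^n(y^n)) / (sup_{(P_1,P_2) ∈ 𝒫̄(𝒵)×𝒫̄(𝒵)} P_1^n(x^n)·P_2^n(y^n)), satisfies −2·ln Λ(x^n,y^n) = 4n·D_JS(T_{x^n}‖T_{y^n}). In particular, the generalized likelihood ratio test for the two-sample testing problem is the divergence test based on the Jensen–Shannon divergence. -/

import Mathlib

open scoped BigOperators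
open Filter MeasureTheory Matrix

namespace TwoSampleTest

variable {m : ℕ}

/-- All probability distributions on the alphabet `Fin (m+1)` (the set `𝒫̄(𝒵)`). -/
def IsDist (P : Fin (m+1) → ℝ) : Prop :=
  (∀ i, 0 ≤ P i) ∧ ∑ i, P i = 1

/-- Strictly positive probability distributions on `Fin (m+1)` (the set `𝒫(𝒵)`). -/
def IsPosDist (P : Fin (m+1) → ℝ) : Prop :=
  (∀ i, 0 < P i) ∧ ∑ i, P i = 1

/-- The open coordinate domain `Ξ ⊆ ℝ^m`. -/
def Xi (m : ℕ) : Set (Fin m → ℝ) :=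
  {x | (∀ i, 0 < x i) ∧ ∑ i, x i < 1}

/-- Coordinate vector (first `m` components) of a distribution on `Fin (m+1)`. -/
def coordOf (P : Fin (m+1) → ℝ) : Fin m → ℝ := fun i => P i.castSucc

/-- Euclidean norm on `ℝ^m`. -/
noncomputable def l2norm (v : Fin m → ℝ) : ℝ := Real.sqrt (∑ i, (v i)^2)

/-- ℓ₁ distance between two distributions. -/
noncomputable def l1dist (P Q : Fin (m+1) → ℝ) : ℝ := ∑ i, |P i - Q i|

/-- A divergence on `𝒫(𝒵)`, viewed through coordinates in `Ξ`. -/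
structure Divergence (m : ℕ) where
  f : (Fin m → ℝ) → (Fin m → ℝ) → ℝ
  smooth : ContDiffOn ℝ (⊤ : ℕ∞)
    (fun p : (Fin m → ℝ) × (Fin m → ℝ) => f p.1 p.2) ((Xi m) ×ˢ (Xi m))
  nonneg : ∀ s ∈ Xi m, ∀ r ∈ Xi m, 0 ≤ f s r
  eq_zero_iff : ∀ s ∈ Xi m, ∀ r ∈ Xi m, (f s r = 0 ↔ s = r)
  taylor : ∀ r ∈ Xi m, ∃ G : Matrix (Fin m) (Fin m) ℝ, G.PosDef ∧
      ∃ C > (0:ℝ), ∃ δ > (0:ℝ), ∀ e : Fin m → ℝ, l2norm e < δ → r + e ∈ Xi m →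
        |f (r + e) r - (1/2) * ∑ i, ∑ j, G i j * e i * e j| ≤ C * (l2norm e)^3
  boundary : ∀ r ∈ Xi m, ∀ S : ℕ → (Fin m → ℝ), (∀ n, S n ∈ Xi m) →
      ∀ L ∈ frontier (Xi m), Filter.Tendsto S Filter.atTop (nhds L) →
        0 < Filter.liminf (fun n => f (S n) r) Filter.atTop

/-- The divergence evaluated at two distributions. -/
noncomputable def Dapp (D : Divergence m) (T R : Fin (m+1) → ℝ) : ℝ :=
  D.f (coordOf T) (coordOf R)

/-- The matrix `A_{D,P}` associated with a divergence `D` at coordinate point `p`: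
`a_{ij} = ½ ∂²D(S‖p)/∂S_i∂S_j` at `S = p`. -/
noncomputable def Amat (D : Divergence m) (p : Fin m → ℝ) : Matrix (Fin m) (Fin m) ℝ :=
  Matrix.of fun i j =>
    (1/2) * fderiv ℝ (fun s => fderiv ℝ (fun s' => D.f s' p) s (Pi.single j 1)) p (Pi.single i 1)

/-- The matrix `Σ_P`. -/
noncomputable def SigmaMat (P : Fin (m+1) → ℝ) : Matrix (Fin m) (Fin m) ℝ :=
  Matrix.of fun i j =>
    if i = j then 1 / P i.castSucc + 1 / P (Fin.last m) else 1 / P (Fin.last m)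

/-- `D` is an invariant divergence with constant `η`. -/
def IsInvariant (D : Divergence m) (η : ℝ) : Prop :=
  ∀ P : Fin (m+1) → ℝ, IsPosDist P → Amat D (coordOf P) = η • SigmaMat P

/-- Quadratic form `vᵀ M v`. -/
noncomputable def quadForm (M : Matrix (Fin m) (Fin m) ℝ) (v : Fin m → ℝ) : ℝ :=
  v ⬝ᵥ M.mulVec v

/-- Type (empirical distribution) of a sequence. -/
noncomputable def typeOf {n : ℕ} (x : Fin n → Fin (m+1)) : Fin (m+1) → ℝ :=
  fun i => ((Finset.univ.filter (fun t => x t = i)).card : ℝ) / n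

/-- Probability of a sequence under i.i.d. sampling from `P`. -/
def probSeq (P : Fin (m+1) → ℝ) {n : ℕ} (x : Fin n → Fin (m+1)) : ℝ := ∏ t, P (x t)

/-- Type-I error of the divergence test with test statistic `Dfun` and threshold `r`,
under common distribution `P`: the probability that `Dfun(T_{X^n}‖T_{Y^n}) ≥ r`. -/
noncomputable def alpha (Dfun : (Fin (m+1) → ℝ) → (Fin (m+1) → ℝ) → ℝ) (r : ℝ)
    (P : Fin (m+1) → ℝ) (n : ℕ) : ℝ :=
  ∑ x : Fin n → Fin (m+1), ∑ y : Fin n → Fin (m+1),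
    if r ≤ Dfun (typeOf x) (typeOf y) then probSeq P x * probSeq P y else 0

/-- Type-II error: the probability under `P₁ × P₂` that `Dfun(T_{X^n}‖T_{Y^n}) < r`. -/
noncomputable def beta (Dfun : (Fin (m+1) → ℝ) → (Fin (m+1) → ℝ) → ℝ) (r : ℝ)
    (P₁ P₂ : Fin (m+1) → ℝ) (n : ℕ) : ℝ :=
  ∑ x : Fin n → Fin (m+1), ∑ y : Fin n → Fin (m+1),
    if Dfun (typeOf x) (typeOf y) < r then probSeq P₁ x * probSeq P₂ y else 0

/-- Kullback-Leibler divergence (with the convention `0 · ln 0 = 0`). -/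
noncomputable def KL (P Q : Fin (m+1) → ℝ) : ℝ := ∑ i, P i * Real.log (P i / Q i)

/-- KL divergence variance. -/
noncomputable def VKL (P Q : Fin (m+1) → ℝ) : ℝ :=
  ∑ i, P i * (Real.log (P i / Q i) - KL P Q)^2

/-- Bhattacharyya distance. -/
noncomputable def DB (P Q : Fin (m+1) → ℝ) : ℝ :=
  - Real.log (∑ i, Real.sqrt (P i * Q i))

/-- The normalized geometric mean `P*` of two distributions. -/
noncomputable def Pstar (P₁ P₂ : Fin (m+1) → ℝ) : Fin (m+1) → ℝ :=
  fun i => Real.sqrt (P₁ i * P₂ i) / ∑ j, Real.sqrt (P₁ j * P₂ j)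

/-- Jensen–Shannon divergence. -/
noncomputable def DJS (T R : Fin (m+1) → ℝ) : ℝ :=
  (1/2) * KL T (fun i => (T i + R i)/2) + (1/2) * KL R (fun i => (T i + R i)/2)

/-- Law of `m` i.i.d. standard Gaussians. -/
noncomputable def stdGaussianPi (m : ℕ) : Measure (Fin m → ℝ) :=
  Measure.pi (fun _ => ProbabilityTheory.gaussianReal 0 1)

/-- Tail probability of the generalized chi-square distribution with weights `lam`:
`P(∑ lam i * U i ^ 2 ≥ c)` for i.i.d. standard normal `U`. -/
noncomputable def genChiSqTail (m : ℕ) (lam : Fin m → ℝ) (c : ℝ) : ℝ :=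
  (stdGaussianPi m {u | c ≤ ∑ i, lam i * (u i)^2}).toReal

/-- Tail probability of the chi-square distribution with `m` degrees of freedom. -/
noncomputable def chiSqTail (m : ℕ) (c : ℝ) : ℝ := genChiSqTail m (fun _ => 1) c

/-- Inverse of the chi-square tail probability. -/
noncomputable def chiSqTailInv (m : ℕ) (ε : ℝ) : ℝ :=
  sInf {c : ℝ | 0 < c ∧ chiSqTail m c ≤ ε}

/-- The linear functional `ℓ_P(T,R)`. -/
noncomputable def ellP (P P₁ P₂ T R : Fin (m+1) → ℝ) : ℝ :=
  ∑ i, (T i - P i) * Real.log (P i / P₁ i) + ∑ i, (R i - P i) * Real.log (P i / P₂ i)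

/-- Membership of `(T,R)` in the set `A_{Σ_P}(r)`. -/
noncomputable def memASigma (P T R : Fin (m+1) → ℝ) (r : ℝ) : Prop :=
  IsPosDist T ∧ IsPosDist R ∧
    quadForm (SigmaMat P) (fun i => coordOf T i - coordOf P i)
      + quadForm (SigmaMat P) (fun i => coordOf R i - coordOf P i) ≤ r

/-- The vector with components `ln(P_i/Q_i) − ln(P_k/Q_k)`, `i = 1,…,k−1`. -/
noncomputable def cvec (P Q : Fin (m+1) → ℝ) : Fin m → ℝ :=
  fun i => Real.log (P i.castSucc / Q i.castSucc) - Real.log (P (Fin.last m) / Q (Fin.last m))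

/-- A type distribution with denominator `n`. -/
def IsTypeDist (n : ℕ) (P : Fin (m+1) → ℝ) : Prop :=
  IsDist P ∧ ∀ i, ∃ a : ℕ, P i = (a : ℝ) / n

/-- The best (largest) type-II error exponent `−(1/n) ln β_n` over all thresholds `r > 0`
whose type-I error is at most `ε` for every common distribution `P ∈ 𝒫(𝒵)`. -/
noncomputable def supExp (Dfun : (Fin (m+1) → ℝ) → (Fin (m+1) → ℝ) → ℝ)
    (P₁ P₂ : Fin (m+1) → ℝ) (ε : ℝ) (n : ℕ) : ℝ :=
  sSup { v : ℝ | ∃ r : ℝ, 0 < r ∧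
    (∀ P : Fin (m+1) → ℝ, IsPosDist P → alpha Dfun r P n ≤ ε) ∧
    v = -(Real.log (beta Dfun r P₁ P₂ n)) / n }

/-- The generalized likelihood ratio of the two-sample testing problem:
numerator is the likelihood maximized over the null `P₁ = P₂ = P ∈ 𝒫̄(𝒵)`,
denominator is the likelihood maximized over all pairs `(P₁,P₂) ∈ 𝒫̄²(𝒵)`. -/
noncomputable def GLR {m n : ℕ} (x y : Fin n → Fin (m+1)) : ℝ :=
  sSup {v : ℝ | ∃ P : Fin (m+1) → ℝ, IsDist P ∧ v = probSeq P x * probSeq P y} /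
  sSup {v : ℝ | ∃ P₁ P₂ : Fin (m+1) → ℝ, IsDist P₁ ∧ IsDist P₂ ∧
    v = probSeq P₁ x * probSeq P₂ y}


/-- Gibbs: the product `∏ P_i^{c_i}` is maximized at the empirical distribution. -/
lemma gibbs {k N : ℕ} (c : Fin k → ℕ) (hN : ∑ i, c i = N) (P : Fin k → ℝ)
    (hP : ∀ i, 0 ≤ P i) (hs : ∑ i, P i = 1) :
    ∏ i, P i ^ c i ≤ ∏ i, ((c i : ℝ) / (N : ℝ)) ^ c i := by
  classical
  rcases Nat.eq_zero_or_pos N with h0 | hNpos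
  · subst h0
    have : ∀ i, c i = 0 := fun i => Finset.sum_eq_zero_iff.mp hN i (Finset.mem_univ i)
    simp [this]
  have hNR : (0:ℝ) < (N:ℝ) := by exact_mod_cast hNpos
  by_cases hz : ∃ i, c i ≠ 0 ∧ P i = 0
  · obtain ⟨i, hci, hPi⟩ := hz
    have hL : ∏ j, P j ^ c j = 0 :=
      Finset.prod_eq_zero (Finset.mem_univ i) (by rw [hPi]; exact zero_pow hci)
    rw [hL]
    exact Finset.prod_nonneg fun j _ => pow_nonneg (by positivity) _
  push_neg at hz
  have hpos : ∀ i, c i ≠ 0 → 0 < P i := fun i hi => lt_of_le_of_ne (hP i) (Ne.symm (hz i hi))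
  set s : Finset (Fin k) := Finset.univ.filter (fun i => c i ≠ 0) with hsdef
  have hmem : ∀ i, i ∈ s ↔ c i ≠ 0 := by intro i; simp [hsdef]
  have hLeq : ∏ i, P i ^ c i = ∏ i ∈ s, P i ^ c i := by
    refine (Finset.prod_subset (Finset.subset_univ s) fun i _ hi => ?_).symm
    have : c i = 0 := by by_contra h; exact hi ((hmem i).mpr h)
    simp [this]
  have hReq : ∏ i, ((c i : ℝ) / (N : ℝ)) ^ c i = ∏ i ∈ s, ((c i : ℝ) / (N : ℝ)) ^ c i := by
    refine (Finset.prod_subset (Finset.subset_univ s) fun i _ hi => ?_).symm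
    have : c i = 0 := by by_contra h; exact hi ((hmem i).mpr h)
    simp [this]
  rw [hLeq, hReq]
  have hLpos : 0 < ∏ i ∈ s, P i ^ c i :=
    Finset.prod_pos fun i hi => pow_pos (hpos i ((hmem i).mp hi)) _
  have hRpos : 0 < ∏ i ∈ s, ((c i : ℝ) / (N : ℝ)) ^ c i := by
    refine Finset.prod_pos fun i hi => pow_pos ?_ _
    have h := (hmem i).mp hi
    have : (0:ℝ) < (c i : ℝ) := by exact_mod_cast Nat.pos_of_ne_zero h
    positivity
  rw [← Real.log_le_log_iff hLpos hRpos]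
  rw [Real.log_prod (fun i hi => (pow_pos (hpos i ((hmem i).mp hi)) _).ne'),
      Real.log_prod (fun i hi => ?_)]
  swap
  · have h := (hmem i).mp hi
    have : (0:ℝ) < (c i : ℝ) := by exact_mod_cast Nat.pos_of_ne_zero h
    exact (pow_pos (by positivity) _).ne'
  simp only [Real.log_pow]
  have key : ∀ i ∈ s, (c i : ℝ) * Real.log (P i) -
      (c i : ℝ) * Real.log ((c i : ℝ) / (N : ℝ)) ≤ (N:ℝ) * P i - (c i : ℝ) := by
    intro i hi
    have hc0 := (hmem i).mp hi
    have hci : (0:ℝ) < (c i : ℝ) := by exact_mod_cast Nat.pos_of_ne_zero hc0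
    have hPi : 0 < P i := hpos i hc0
    rw [← mul_sub, ← Real.log_div hPi.ne' (by positivity)]
    have h1 : Real.log (P i / ((c i : ℝ) / (N:ℝ))) ≤ P i / ((c i : ℝ) / (N:ℝ)) - 1 :=
      Real.log_le_sub_one_of_pos (by positivity)
    calc (c i : ℝ) * Real.log (P i / ((c i : ℝ) / (N:ℝ)))
        ≤ (c i : ℝ) * (P i / ((c i : ℝ) / (N:ℝ)) - 1) :=
          mul_le_mul_of_nonneg_left h1 hci.le
      _ = (N:ℝ) * P i - (c i : ℝ) := by field_simp
  have hsum := Finset.sum_le_sum key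
  rw [Finset.sum_sub_distrib] at hsum
  have hsumc : ∑ i ∈ s, (c i : ℝ) = (N:ℝ) := by
    rw [← Nat.cast_sum]
    congr 1
    rw [← hN]
    refine Finset.sum_subset (Finset.subset_univ s) fun i _ hi => ?_
    by_contra h; exact hi ((hmem i).mpr h)
  have hsumP : ∑ i ∈ s, P i ≤ 1 := by
    rw [← hs]
    exact Finset.sum_le_sum_of_subset_of_nonneg (Finset.subset_univ s) fun i _ _ => hP i
  have h2 : ∑ i ∈ s, ((N:ℝ) * P i - (c i : ℝ)) ≤ 0 := by
    rw [Finset.sum_sub_distrib, ← Finset.mul_sum, hsumc]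
    nlinarith
  linarith

lemma probSeq_eq_prod_pow {m n : ℕ} (P : Fin (m+1) → ℝ) (x : Fin n → Fin (m+1)) :
    probSeq P x = ∏ i, P i ^ (Finset.univ.filter (fun t => x t = i)).card := by
  classical
  rw [probSeq, ← Finset.prod_fiberwise Finset.univ x (fun t => P (x t))]
  refine Finset.prod_congr rfl fun i _ => ?_
  rw [Finset.prod_congr rfl (fun t ht => show P (x t) = P i by
      rw [(Finset.mem_filter.mp ht).2]), Finset.prod_const]

lemma sum_count {m n : ℕ} (x : Fin n → Fin (m+1)) :
    ∑ i, (Finset.univ.filter (fun t => x t = i)).card = n := by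
  classical
  have := Finset.card_eq_sum_card_fiberwise
    (f := x) (s := (Finset.univ : Finset (Fin n))) (t := Finset.univ)
    (fun t _ => Finset.mem_univ (x t))
  simpa using this.symm

lemma log_term (n a u v : ℕ) (hn : 0 < n) (ha : a ≤ u + v) :
    (a:ℝ) * Real.log ((a:ℝ)/(n:ℝ)) - (a:ℝ) * Real.log (((u:ℝ)+(v:ℝ))/(2*(n:ℝ))) =
      (n:ℝ) * (((a:ℝ)/(n:ℝ)) *
        Real.log (((a:ℝ)/(n:ℝ)) / ((((u:ℝ)/(n:ℝ)) + ((v:ℝ)/(n:ℝ)))/2))) := by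
  have hnR : (0:ℝ) < (n:ℝ) := by exact_mod_cast hn
  rcases Nat.eq_zero_or_pos a with h0 | hapos
  · simp [h0]
  have haR : (0:ℝ) < (a:ℝ) := by exact_mod_cast hapos
  have huv : (0:ℝ) < (u:ℝ) + (v:ℝ) := by
    have : 0 < u + v := lt_of_lt_of_le hapos ha
    exact_mod_cast this
  have h1 : (((u:ℝ)/(n:ℝ)) + ((v:ℝ)/(n:ℝ)))/2 = ((u:ℝ)+(v:ℝ))/(2*(n:ℝ)) := by
    rw [← add_div, div_div, mul_comm (n:ℝ) 2]
  rw [h1, Real.log_div (by positivity : ((a:ℝ)/(n:ℝ)) ≠ 0) (by positivity)]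
  have hne : (n:ℝ) ≠ 0 := hnR.ne'
  have gen : ∀ L1 L2 : ℝ, (n:ℝ) * (((a:ℝ)/(n:ℝ)) * (L1 - L2)) = (a:ℝ)*L1 - (a:ℝ)*L2 := by
    intro L1 L2; field_simp
  exact (gen _ _).symm

lemma uniform_isDist (m : ℕ) : IsDist (fun _ : Fin (m+1) => 1/((m:ℝ)+1)) := by
  constructor
  · intro i; positivity
  · rw [Finset.sum_const, Finset.card_univ, Fintype.card_fin, nsmul_eq_mul]
    have : ((m:ℝ)+1) ≠ 0 := by positivity
    push_cast
    field_simp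

/-- The GLRT statistic of the two-sample testing problem equals
`4n` times the Jensen–Shannon divergence between the types of the two sequences;
in particular, the GLRT is the divergence test based on `D_JS`. -/
theorem glrt_eq_js_test {m : ℕ} (hm : 1 ≤ m) (n : ℕ) (x y : Fin n → Fin (m+1)) :
    -2 * Real.log (GLR x y) = 4 * n * DJS (typeOf x) (typeOf y) := by
  classical
  set cx : Fin (m+1) → ℕ := fun i => (Finset.univ.filter (fun t => x t = i)).card with hcxdef
  set cy : Fin (m+1) → ℕ := fun i => (Finset.univ.filter (fun t => y t = i)).card with hcydef
  have hpx : ∀ P : Fin (m+1) → ℝ, probSeq P x = ∏ i, P i ^ cx i :=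
    fun P => probSeq_eq_prod_pow P x
  have hpy : ∀ P : Fin (m+1) → ℝ, probSeq P y = ∏ i, P i ^ cy i :=
    fun P => probSeq_eq_prod_pow P y
  have hsx : ∑ i, cx i = n := sum_count x
  have hsy : ∑ i, cy i = n := sum_count y
  rcases Nat.eq_zero_or_pos n with hn | hn
  · subst hn
    have hprob : ∀ P : Fin (m+1) → ℝ, probSeq P x * probSeq P y = 1 := by
      intro P; simp [probSeq]
    have h1 : GLR x y = 1 := by
      rw [GLR]
      have e1 : {v : ℝ | ∃ P : Fin (m+1) → ℝ, IsDist P ∧ v = probSeq P x * probSeq P y}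
          = {1} := by
        ext v
        simp only [Set.mem_setOf_eq, Set.mem_singleton_iff]
        constructor
        · rintro ⟨P, _, rfl⟩; exact hprob P
        · rintro rfl
          exact ⟨_, uniform_isDist m, (hprob _).symm⟩
      have e2 : {v : ℝ | ∃ P₁ P₂ : Fin (m+1) → ℝ, IsDist P₁ ∧ IsDist P₂ ∧
          v = probSeq P₁ x * probSeq P₂ y} = {1} := by
        ext v
        simp only [Set.mem_setOf_eq, Set.mem_singleton_iff]
        constructor
        · rintro ⟨P₁, P₂, _, _, rfl⟩; simp [probSeq]
        · rintro rfl
          exact ⟨_, _, uniform_isDist m, uniform_isDist m, by simp [probSeq]⟩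
      rw [e1, e2, csSup_singleton]
      norm_num
    rw [h1]
    simp
  -- main case: n > 0
  have hnR : (0:ℝ) < (n:ℝ) := by exact_mod_cast hn
  have h2n : 0 < 2*n := by omega
  have h2nR : (0:ℝ) < ((2*n:ℕ):ℝ) := by exact_mod_cast h2n
  have hfacpos : ∀ (c : Fin (m+1) → ℕ) (Nr : ℝ), 0 < Nr →
      ∀ i, 0 < ((c i:ℝ)/Nr)^(c i) := by
    intro c Nr hNr i
    rcases Nat.eq_zero_or_pos (c i) with h|h
    · simp [h]
    · have : (0:ℝ) < (c i:ℝ) := by exact_mod_cast h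
      positivity
  set Vnum : ℝ := ∏ i, ((((cx i + cy i : ℕ)):ℝ)/((2*n:ℕ):ℝ)) ^ (cx i + cy i) with hVnumdef
  set Vx : ℝ := ∏ i, (((cx i:ℕ):ℝ)/((n:ℕ):ℝ)) ^ (cx i) with hVxdef
  set Vy : ℝ := ∏ i, (((cy i:ℕ):ℝ)/((n:ℕ):ℝ)) ^ (cy i) with hVydef
  have hVnumpos : 0 < Vnum :=
    Finset.prod_pos fun i _ => hfacpos (fun i => cx i + cy i) _ h2nR i
  have hVxpos : 0 < Vx := Finset.prod_pos fun i _ => hfacpos cx _ hnR i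
  have hVypos : 0 < Vy := Finset.prod_pos fun i _ => hfacpos cy _ hnR i
  have hsum2 : ∑ i, (cx i + cy i) = 2*n := by
    rw [Finset.sum_add_distrib, hsx, hsy]; ring
  have hMdist : IsDist (fun i => (((cx i + cy i : ℕ)):ℝ)/((2*n:ℕ):ℝ)) := by
    constructor
    · intro i; positivity
    · rw [← Finset.sum_div, ← Nat.cast_sum, hsum2, div_self h2nR.ne']
  have hTxdist : IsDist (fun i => ((cx i:ℕ):ℝ)/((n:ℕ):ℝ)) := by
    constructor
    · intro i; positivity
    · rw [← Finset.sum_div, ← Nat.cast_sum, hsx, div_self hnR.ne']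
  have hTydist : IsDist (fun i => ((cy i:ℕ):ℝ)/((n:ℕ):ℝ)) := by
    constructor
    · intro i; positivity
    · rw [← Finset.sum_div, ← Nat.cast_sum, hsy, div_self hnR.ne']
  have hnumG : IsGreatest
      {v : ℝ | ∃ P : Fin (m+1) → ℝ, IsDist P ∧ v = probSeq P x * probSeq P y} Vnum := by
    constructor
    · refine ⟨_, hMdist, ?_⟩
      rw [hpx, hpy, ← Finset.prod_mul_distrib, hVnumdef]
      exact Finset.prod_congr rfl fun i _ => pow_add _ _ _
    · rintro v ⟨P, hP, rfl⟩
      rw [hpx, hpy, ← Finset.prod_mul_distrib]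
      have heq : ∏ i, P i ^ cx i * P i ^ cy i = ∏ i, P i ^ (cx i + cy i) :=
        Finset.prod_congr rfl fun i _ => (pow_add _ _ _).symm
      rw [heq]
      exact gibbs (fun i => cx i + cy i) hsum2 P hP.1 hP.2
  have hdenG : IsGreatest
      {v : ℝ | ∃ P₁ P₂ : Fin (m+1) → ℝ, IsDist P₁ ∧ IsDist P₂ ∧
        v = probSeq P₁ x * probSeq P₂ y} (Vx * Vy) := by
    constructor
    · exact ⟨_, _, hTxdist, hTydist, by rw [hpx, hpy]⟩
    · rintro v ⟨P₁, P₂, h1, h2, rfl⟩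
      rw [hpx, hpy]
      have g1 := gibbs cx hsx P₁ h1.1 h1.2
      have g2 := gibbs cy hsy P₂ h2.1 h2.2
      exact mul_le_mul g1 g2
        (Finset.prod_nonneg fun i _ => pow_nonneg (h2.1 i) _)
        (Finset.prod_nonneg fun i _ => pow_nonneg (by positivity) _)
  have hGLR : GLR x y = Vnum / (Vx * Vy) := by
    rw [GLR, hnumG.csSup_eq, hdenG.csSup_eq]
  rw [hGLR, Real.log_div hVnumpos.ne' (mul_pos hVxpos hVypos).ne',
    Real.log_mul hVxpos.ne' hVypos.ne']
  have hlogV : ∀ (c : Fin (m+1) → ℕ) (Nr : ℝ), 0 < Nr →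
      Real.log (∏ i, ((c i:ℝ)/Nr)^(c i)) = ∑ i, (c i:ℝ) * Real.log ((c i:ℝ)/Nr) := by
    intro c Nr hNr
    rw [Real.log_prod (fun i _ => (hfacpos c Nr hNr i).ne')]
    simp only [Real.log_pow]
  rw [hVnumdef, hVxdef, hVydef, hlogV _ _ h2nR, hlogV _ _ hnR, hlogV _ _ hnR]
  have hTx : typeOf x = fun i => (cx i : ℝ)/(n:ℝ) := rfl
  have hTy : typeOf y = fun i => (cy i : ℝ)/(n:ℝ) := rfl
  rw [hTx, hTy]
  simp only [DJS, KL]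
  have e1 : ∑ i, (((cx i + cy i : ℕ)):ℝ) * Real.log ((((cx i + cy i : ℕ)):ℝ)/((2*n:ℕ):ℝ))
      = ∑ i, ((cx i:ℝ) * Real.log (((cx i:ℝ)+(cy i:ℝ))/(2*(n:ℝ)))
            + (cy i:ℝ) * Real.log (((cx i:ℝ)+(cy i:ℝ))/(2*(n:ℝ)))) := by
    refine Finset.sum_congr rfl fun i _ => ?_
    push_cast
    ring
  rw [e1, Finset.sum_add_distrib]
  have ex : (∑ i, (cx i:ℝ) * Real.log ((cx i:ℝ)/((n:ℕ):ℝ)))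
      - (∑ i, (cx i:ℝ) * Real.log (((cx i:ℝ)+(cy i:ℝ))/(2*(n:ℝ))))
      = (n:ℝ) * ∑ i, ((cx i:ℝ)/(n:ℝ)) *
          Real.log (((cx i:ℝ)/(n:ℝ)) / ((((cx i:ℝ)/(n:ℝ)) + ((cy i:ℝ)/(n:ℝ)))/2)) := by
    rw [← Finset.sum_sub_distrib, Finset.mul_sum]
    exact Finset.sum_congr rfl fun i _ => log_term n (cx i) (cx i) (cy i) hn (Nat.le_add_right _ _)
  have ey : (∑ i, (cy i:ℝ) * Real.log ((cy i:ℝ)/((n:ℕ):ℝ)))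
      - (∑ i, (cy i:ℝ) * Real.log (((cx i:ℝ)+(cy i:ℝ))/(2*(n:ℝ))))
      = (n:ℝ) * ∑ i, ((cy i:ℝ)/(n:ℝ)) *
          Real.log (((cy i:ℝ)/(n:ℝ)) / ((((cx i:ℝ)/(n:ℝ)) + ((cy i:ℝ)/(n:ℝ)))/2)) := by
    rw [← Finset.sum_sub_distrib, Finset.mul_sum]
    exact Finset.sum_congr rfl fun i _ => log_term n (cy i) (cx i) (cy i) hn (Nat.le_add_left _ _)
  linear_combination (2:ℝ) * ex + (2:ℝ) * ey

end TwoSampleTest
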